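/- Along any zero-energy solution c of the Kepler-Heisenberg system (i.e., a solution with H(c(t)) = 0 for all t), the dilational momentum J = x·p_x + y·p_y + 2z·p_z is conserved: t ↦ J(c(t)) is constant on the interval of definition. -/

import Mathlib

/-- `P_X = p_x - (1/2) y p_z`, where phase space coordinates are
`(x, y, z, p_x, p_y, p_z) = (p 0, p 1, p 2, p 3, p 4, p 5)`. -/
noncomputable def PX (p : Fin 6 → ℝ) : ℝ := p 3 - (1/2) * p 1 * p 5

/-- `P_Y = p_y + (1/2) x p_z`. -/
noncomputable def PY (p : Fin 6 → ℝ) : ℝ := p 4 + (1/2) * p 0 * p 5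

/-- `Q = (x² + y²)² + 16 z²`. -/
noncomputable def Qf (p : Fin 6 → ℝ) : ℝ := ((p 0)^2 + (p 1)^2)^2 + 16 * (p 2)^2

/-- The Kepler–Heisenberg Hamiltonian `H = (1/2)(P_X² + P_Y²) - (1/(8π)) Q^{-1/2}`. -/
noncomputable def Ham (p : Fin 6 → ℝ) : ℝ :=
  (1/2) * ((PX p)^2 + (PY p)^2) - (1/(8*Real.pi)) * (Qf p) ^ (-(1/2) : ℝ)

/-- A solution of the Kepler–Heisenberg system: a differentiable curve on an open
interval (open preconnected set) `I`, whose position component never vanishes, and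
which satisfies Hamilton's equations for `Ham`. -/
def IsSolutionOn (c : ℝ → Fin 6 → ℝ) (I : Set ℝ) : Prop :=
  IsOpen I ∧ IsPreconnected I ∧
  ∀ t ∈ I,
    (¬ (c t 0 = 0 ∧ c t 1 = 0 ∧ c t 2 = 0)) ∧
    HasDerivAt (fun τ => c τ 0) (fderiv ℝ Ham (c t) (Pi.single 3 1)) t ∧
    HasDerivAt (fun τ => c τ 1) (fderiv ℝ Ham (c t) (Pi.single 4 1)) t ∧
    HasDerivAt (fun τ => c τ 2) (fderiv ℝ Ham (c t) (Pi.single 5 1)) t ∧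
    HasDerivAt (fun τ => c τ 3) (-(fderiv ℝ Ham (c t) (Pi.single 0 1))) t ∧
    HasDerivAt (fun τ => c τ 4) (-(fderiv ℝ Ham (c t) (Pi.single 1 1))) t ∧
    HasDerivAt (fun τ => c τ 5) (-(fderiv ℝ Ham (c t) (Pi.single 2 1))) t

/-- The dilational momentum `J = x p_x + y p_y + 2 z p_z`. -/
noncomputable def Jmom (p : Fin 6 → ℝ) : ℝ := p 0 * p 3 + p 1 * p 4 + 2 * p 2 * p 5

set_option maxHeartbeats 1000000

noncomputable def pr (i : Fin 6) : (Fin 6 → ℝ) →L[ℝ] ℝ := ContinuousLinearMap.proj i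

lemma hx (i : Fin 6) (q : Fin 6 → ℝ) : HasFDerivAt (fun p : Fin 6 → ℝ => p i) (pr i) q :=
  (pr i).hasFDerivAt

lemma fderiv_Ham (q : Fin 6 → ℝ) (hq : Qf q ≠ 0) (v : Fin 6 → ℝ) :
    fderiv ℝ Ham q v =
      PX q * (v 3 - (1/2) * v 1 * q 5 - (1/2) * q 1 * v 5)
      + PY q * (v 4 + (1/2) * v 0 * q 5 + (1/2) * q 0 * v 5)
      + (1/(16*Real.pi)) * (Qf q) ^ (-(3/2) : ℝ) *
          (2*((q 0)^2+(q 1)^2)*(2*q 0*v 0+2*q 1*v 1) + 32*q 2*v 2) := by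
  have hPX : HasFDerivAt PX (pr 3 - ((1/2 * q 1) • pr 5 + q 5 • ((1/2 : ℝ) • pr 1))) q :=
    (hx 3 q).sub (((hx 1 q).const_mul (1/2)).mul (hx 5 q))
  have hPY : HasFDerivAt PY (pr 4 + ((1/2 * q 0) • pr 5 + q 5 • ((1/2 : ℝ) • pr 0))) q :=
    (hx 4 q).add (((hx 0 q).const_mul (1/2)).mul (hx 5 q))
  have hsq : HasFDerivAt (fun p : Fin 6 → ℝ => (p 0)^2 + (p 1)^2)
      (((2:ℕ) * q 0 ^ 1) • pr 0 + ((2:ℕ) * q 1 ^ 1) • pr 1) q := by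
    have h := ((hasDerivAt_pow 2 (q 0)).comp_hasFDerivAt q (hx 0 q)).add
      ((hasDerivAt_pow 2 (q 1)).comp_hasFDerivAt q (hx 1 q))
    exact h
  have hQ : HasFDerivAt Qf
      ((((2:ℕ) * ((q 0)^2 + (q 1)^2) ^ 1) • (((2:ℕ) * q 0 ^ 1) • pr 0 + ((2:ℕ) * q 1 ^ 1) • pr 1))
        + (16:ℝ) • (((2:ℕ) * q 2 ^ 1) • pr 2)) q := by
    have h := ((hasDerivAt_pow 2 ((q 0)^2 + (q 1)^2)).comp_hasFDerivAt q hsq).add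
      (((hasDerivAt_pow 2 (q 2)).comp_hasFDerivAt q (hx 2 q)).const_mul (16:ℝ))
    exact h
  have hrpow : HasFDerivAt (fun p => (Qf p) ^ (-(1/2) : ℝ))
      ((-(1/2) * Qf q ^ ((-(1/2) : ℝ) - 1)) •
        ((((2:ℕ) * ((q 0)^2 + (q 1)^2) ^ 1) • (((2:ℕ) * q 0 ^ 1) • pr 0 + ((2:ℕ) * q 1 ^ 1) • pr 1))
          + (16:ℝ) • (((2:ℕ) * q 2 ^ 1) • pr 2))) q :=
    (Real.hasDerivAt_rpow_const (Or.inl hq)).comp_hasFDerivAt q hQ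
  have hH : HasFDerivAt Ham
      ((1/2 : ℝ) • ((PX q • (pr 3 - ((1/2 * q 1) • pr 5 + q 5 • ((1/2 : ℝ) • pr 1)))
          + PX q • (pr 3 - ((1/2 * q 1) • pr 5 + q 5 • ((1/2 : ℝ) • pr 1))))
        + (PY q • (pr 4 + ((1/2 * q 0) • pr 5 + q 5 • ((1/2 : ℝ) • pr 0)))
          + PY q • (pr 4 + ((1/2 * q 0) • pr 5 + q 5 • ((1/2 : ℝ) • pr 0)))))
        - (1/(8*Real.pi)) • ((-(1/2) * Qf q ^ ((-(1/2) : ℝ) - 1)) •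
        ((((2:ℕ) * ((q 0)^2 + (q 1)^2) ^ 1) • (((2:ℕ) * q 0 ^ 1) • pr 0 + ((2:ℕ) * q 1 ^ 1) • pr 1))
          + (16:ℝ) • (((2:ℕ) * q 2 ^ 1) • pr 2)))) q := by
    have h1 := ((hPX.mul hPX)).add ((hPY.mul hPY))
    have h2 := (h1.const_mul (1/2)).sub (hrpow.const_mul (1/(8*Real.pi)))
    have : Ham = fun p => 1/2 * (PX p * PX p + PY p * PY p) - 1/(8*Real.pi) * (Qf p) ^ (-(1/2) : ℝ) := by
      funext p; simp [Ham]; ring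
    rw [this]; exact h2
  rw [hH.fderiv]
  have hval : ∀ i : Fin 6, pr i v = v i := fun i => rfl
  simp only [ContinuousLinearMap.coe_sub', ContinuousLinearMap.coe_add',
    ContinuousLinearMap.coe_smul', Pi.sub_apply, Pi.add_apply, Pi.smul_apply, hval,
    smul_eq_mul]
  have h32 : Qf q ^ ((-(1/2) : ℝ) - 1) = Qf q ^ (-(3/2) : ℝ) := by norm_num
  rw [h32]
  ring

/-- Along any zero-energy solution of the Kepler–Heisenberg system, the dilational
momentum `J = x p_x + y p_y + 2 z p_z` is conserved. -/
theorem kh_zero_energy_J_conserved (c : ℝ → Fin 6 → ℝ) (I : Set ℝ)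
    (hc : IsSolutionOn c I) (hE : ∀ t ∈ I, Ham (c t) = 0) :
    ∀ t₁ ∈ I, ∀ t₂ ∈ I, Jmom (c t₁) = Jmom (c t₂) := by
  obtain ⟨hIopen, hIconn, hsol⟩ := hc
  have key : ∀ t ∈ I, HasDerivAt (fun τ => Jmom (c τ)) 0 t := by
    intro t ht
    obtain ⟨hpos, h0, h1, h2, h3, h4, h5⟩ := hsol t ht
    set q := c t with hqdef
    have hQpos : 0 < Qf q := by
      have h' : q 0 ≠ 0 ∨ q 1 ≠ 0 ∨ q 2 ≠ 0 := by tauto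
      unfold Qf
      rcases h' with h | h | h
      · positivity
      · positivity
      · positivity
    have hQne : Qf q ≠ 0 := ne_of_gt hQpos
    have hAB : Qf q ^ (-(3/2):ℝ) * Qf q = Qf q ^ (-(1/2):ℝ) := by
      rw [← Real.rpow_add_one hQne]; norm_num
    have hJ : HasDerivAt (fun τ => Jmom (c τ))
        ((fderiv ℝ Ham q (Pi.single 3 1) * q 3 + q 0 * (-(fderiv ℝ Ham q (Pi.single 0 1))))
        + (fderiv ℝ Ham q (Pi.single 4 1) * q 4 + q 1 * (-(fderiv ℝ Ham q (Pi.single 1 1))))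
        + ((2 * fderiv ℝ Ham q (Pi.single 5 1)) * q 5
            + (2 * q 2) * (-(fderiv ℝ Ham q (Pi.single 2 1))))) t := by
      have := ((h0.mul h3).add (h1.mul h4)).add ((h2.const_mul 2).mul h5)
      exact this
    have hzero :
        ((fderiv ℝ Ham q (Pi.single 3 1) * q 3 + q 0 * (-(fderiv ℝ Ham q (Pi.single 0 1))))
        + (fderiv ℝ Ham q (Pi.single 4 1) * q 4 + q 1 * (-(fderiv ℝ Ham q (Pi.single 1 1))))
        + ((2 * fderiv ℝ Ham q (Pi.single 5 1)) * q 5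
            + (2 * q 2) * (-(fderiv ℝ Ham q (Pi.single 2 1))))) = 2 * Ham q := by
      rw [fderiv_Ham q hQne, fderiv_Ham q hQne, fderiv_Ham q hQne, fderiv_Ham q hQne,
        fderiv_Ham q hQne, fderiv_Ham q hQne]
      have hs : ∀ i j : Fin 6, (Pi.single i 1 : Fin 6 → ℝ) j = if j = i then (1:ℝ) else (0:ℝ) := by
        intro i j; simp [Pi.single_apply]
      simp only [hs, Fin.reduceEq, if_true, if_false, reduceIte]
      unfold Qf at hAB
      simp only [Ham, PX, PY, Qf]
      linear_combination (-(1/(4*Real.pi))) * hAB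
    rw [hzero, hE t ht, mul_zero] at hJ
    exact hJ
  have hconv : Convex ℝ I := convex_iff_ordConnected.mpr hIconn.ordConnected
  intro t₁ ht₁ t₂ ht₂
  refine hconv.is_const_of_fderivWithin_eq_zero (𝕜 := ℝ)
    (fun t ht => ((key t ht).differentiableAt).differentiableWithinAt) ?_ ht₁ ht₂
  intro t ht
  have h := ((key t ht).hasFDerivAt.hasFDerivWithinAt).fderivWithin (hIopen.uniqueDiffWithinAt ht)
  rw [h]
  ext
  simp
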